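/- Let k ≥ 1 and let a₁, …, a_k, b₁, …, b_k be positive integers with a_i·b_j ≠ a_j·b_i for all 1 ≤ i < j ≤ k. Let A be a nonzero integer that is a multiple of each b_j (1 ≤ j ≤ k) and a multiple of each a_i·b_j − a_j·b_i (1 ≤ i < j ≤ k). Let Q₁, …, Q_k be pairwise relatively prime positive integers, each of which is also relatively prime to A. Let r be an integer such that Q_j divides a_j·A·r + b_j for each 1 ≤ j ≤ k. Then for each 1 ≤ j ≤ k, the greatest common divisor of a_j·A·Q₁·Q₂⋯Q_k and a_j·A·r + b_j is exactly Q_j·b_j. -/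

import Mathlib

theorem gcd_lemma
    (k : ℕ) (hk : 1 ≤ k) (a b : ℕ → ℤ)
    (ha : ∀ i, i < k → 0 < a i) (hb : ∀ i, i < k → 0 < b i)
    (hab : ∀ i j, i < j → j < k → a i * b j ≠ a j * b i)
    (A : ℤ) (hA : A ≠ 0)
    (hAb : ∀ j, j < k → b j ∣ A)
    (hAab : ∀ i j, i < j → j < k → (a i * b j - a j * b i) ∣ A)
    (Q : ℕ → ℤ) (hQpos : ∀ j, j < k → 0 < Q j)
    (hQcop : ∀ i j, i < k → j < k → i ≠ j → IsCoprime (Q i) (Q j))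
    (hQA : ∀ j, j < k → IsCoprime (Q j) A)
    (r : ℤ) (hr : ∀ j, j < k → Q j ∣ (a j * A * r + b j)) :
    ∀ j, j < k →
      (Int.gcd (a j * A * ∏ i ∈ Finset.range k, Q i) (a j * A * r + b j) : ℤ) =
        Q j * b j := by
  intro j hj
  set N : ℤ := a j * A * r + b j with hN
  have hbj : 0 < b j := hb j hj
  have hQj : 0 < Q j := hQpos j hj
  have hbjA : b j ∣ A := hAb j hj
  have hbjaA : b j ∣ a j * A := hbjA.mul_left (a j)
  have hbjN : b j ∣ N := by
    have h1 : b j ∣ a j * A * r := hbjaA.mul_right r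
    exact dvd_add h1 dvd_rfl
  have hQjN : Q j ∣ N := hr j hj
  have hcopQb : IsCoprime (Q j) (b j) := (hQA j hj).of_isCoprime_of_dvd_right hbjA
  -- Key: for i ≠ j, Q i is coprime to N
  have key : ∀ i, i < k → i ≠ j → IsCoprime (Q i) N := by
    intro i hi hij
    rw [Int.isCoprime_iff_gcd_eq_one]
    set d : ℤ := (Int.gcd (Q i) N : ℤ) with hd
    have hdQ : d ∣ Q i := Int.gcd_dvd_left _ _
    have hdN : d ∣ N := Int.gcd_dvd_right _ _
    have hdA : IsCoprime d A := (hQA i hi).of_isCoprime_of_dvd_left hdQ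
    have hdM : d ∣ a i * A * r + b i := hdQ.trans (hr i hi)
    have hDA : (a j * b i - a i * b j) ∣ A := by
      rcases lt_or_gt_of_ne hij with h | h
      · have := hAab i j h hj
        have h2 : -(a i * b j - a j * b i) ∣ A := (neg_dvd.mpr this)
        simpa [neg_sub] using h2
      · exact hAab j i h hi
    have hcomb : d ∣ A * (r * (a j * b i - a i * b j)) := by
      have : A * (r * (a j * b i - a i * b j)) =
          b i * N - b j * (a i * A * r + b i) := by ring
      rw [this]
      exact dvd_sub (hdN.mul_left _) (hdM.mul_left _)
    have hdr : d ∣ r * (a j * b i - a i * b j) :=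
      hdA.dvd_of_dvd_mul_left hcomb
    have hdD : IsCoprime d (a j * b i - a i * b j) :=
      hdA.of_isCoprime_of_dvd_right hDA
    have hdrr : d ∣ r := hdD.dvd_of_dvd_mul_right hdr
    have hdbi : d ∣ b i := by
      have h1 : d ∣ a i * A * r := (hdrr.mul_left _)
      have : b i = (a i * A * r + b i) - a i * A * r := by ring
      rw [this]; exact dvd_sub hdM h1
    have hdA' : d ∣ A := hdbi.trans (hAb i hi)
    have : IsUnit d := hdA.isUnit_of_dvd' dvd_rfl hdA'
    rcases Int.isUnit_iff.mp this with h | h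
    · rw [hd] at h; exact_mod_cast h
    · exfalso
      have : (0 : ℤ) ≤ d := Int.natCast_nonneg _
      omega
  have hjm : j ∈ Finset.range k := Finset.mem_range.mpr hj
  set P : ℤ := ∏ i ∈ (Finset.range k).erase j, Q i with hP
  have hprod : ∏ i ∈ Finset.range k, Q i = Q j * P :=
    (Finset.mul_prod_erase _ _ hjm).symm
  have hPN : IsCoprime P N :=
    IsCoprime.prod_left fun i hi =>
      key i (Finset.mem_range.mp (Finset.mem_of_mem_erase hi))
        (Finset.ne_of_mem_erase hi)
  -- gcd (a j * A) N = b j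
  have gcd1 : (Int.gcd (a j * A) N : ℤ) = b j := by
    apply Int.dvd_antisymm (Int.natCast_nonneg _) hbj.le
    · have h1 : (Int.gcd (a j * A) N : ℤ) ∣ a j * A := Int.gcd_dvd_left _ _
      have h2 : (Int.gcd (a j * A) N : ℤ) ∣ N := Int.gcd_dvd_right _ _
      have : b j = N - a j * A * r := by rw [hN]; ring
      rw [this]
      exact dvd_sub h2 (h1.mul_right r)
    · exact Int.dvd_coe_gcd hbjaA hbjN
  -- gcd (∏ Q) N = Q j
  have gcd2 : (Int.gcd (∏ i ∈ Finset.range k, Q i) N : ℤ) = Q j := by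
    apply Int.dvd_antisymm (Int.natCast_nonneg _) hQj.le
    · have h1 : (Int.gcd (∏ i ∈ Finset.range k, Q i) N : ℤ) ∣ Q j * P := by
        rw [← hprod]; exact Int.gcd_dvd_left _ _
      have h2 : (Int.gcd (∏ i ∈ Finset.range k, Q i) N : ℤ) ∣ N := Int.gcd_dvd_right _ _
      have hcop : IsCoprime ((Int.gcd (∏ i ∈ Finset.range k, Q i) N : ℤ)) P :=
        (hPN.of_isCoprime_of_dvd_right h2).symm
      exact hcop.dvd_of_dvd_mul_right h1
    · exact Int.dvd_coe_gcd (Finset.dvd_prod_of_mem Q hjm) hQjN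
  apply Int.dvd_antisymm (Int.natCast_nonneg _) (by positivity)
  · -- gcd ∣ Q j * b j
    have hmul : Int.gcd (a j * A * ∏ i ∈ Finset.range k, Q i) N ∣
        Int.gcd (a j * A) N * Int.gcd (∏ i ∈ Finset.range k, Q i) N := by
      unfold Int.gcd
      rw [Int.natAbs_mul]
      calc Nat.gcd ((a j * A).natAbs * (∏ i ∈ Finset.range k, Q i).natAbs) N.natAbs
          = Nat.gcd N.natAbs ((a j * A).natAbs * (∏ i ∈ Finset.range k, Q i).natAbs) :=
            Nat.gcd_comm _ _
        _ ∣ Nat.gcd N.natAbs (a j * A).natAbs * Nat.gcd N.natAbs (∏ i ∈ Finset.range k, Q i).natAbs :=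
            Nat.gcd_mul_right_dvd_mul_gcd _ _ _
        _ = Nat.gcd (a j * A).natAbs N.natAbs * Nat.gcd (∏ i ∈ Finset.range k, Q i).natAbs N.natAbs := by
            rw [Nat.gcd_comm N.natAbs, Nat.gcd_comm N.natAbs]
    have : (Int.gcd (a j * A * ∏ i ∈ Finset.range k, Q i) N : ℤ) ∣
        (Int.gcd (a j * A) N : ℤ) * (Int.gcd (∏ i ∈ Finset.range k, Q i) N : ℤ) := by
      exact_mod_cast hmul
    rw [gcd1, gcd2] at this
    rwa [mul_comm (Q j) (b j)]
  · -- Q j * b j ∣ gcd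
    apply Int.dvd_coe_gcd
    · refine hcopQb.mul_dvd ?_ ?_
      · rw [hprod]
        exact (dvd_mul_right (Q j) P).mul_left _
      · exact hbjaA.mul_right _
    · exact hcopQb.mul_dvd hQjN hbjN
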